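/- Let B₀ = (b_{ij}) ∈ ℝ^{n×n} be symmetric positive definite and 1 ≤ s₀ ≤ n. Define ρ_min(s₀, |B₀|) = min{|q|ᵀ |B₀| |q| : q ∈ S^{n−1} with at most s₀ nonzero entries}, where |q| = (|q₁|,…,|q_n|). Then the quantity ρ̃(s₀, |B₀|) = sup{Σ_{i,j} |b_{ij}||q_i||h_j| : q, h ∈ S^{n−1} each with at most s₀ nonzero entries} satisfies ρ̃(s₀, |B₀|) ≤ min( 2 ρ_max(min(2s₀, n), (|b_{ij}|)) − ρ_min(s₀, |B₀|), √s₀ ‖B₀‖₂ ). -/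

import Mathlib

open MeasureTheory Matrix Finset

/-- Euclidean (ℓ₂) norm of a vector. -/
noncomputable def e2 {ι : Type*} [Fintype ι] (v : ι → ℝ) : ℝ :=
  Real.sqrt (∑ i, v i ^ 2)

/-- Operator (spectral) norm of a matrix. -/
noncomputable def opNorm {α β : Type*} [Fintype α] [Fintype β]
    (M : Matrix α β ℝ) : ℝ :=
  sSup {r | ∃ q : β → ℝ, e2 q ≤ 1 ∧ r = e2 (M.mulVec q)}

/-- A vector with at most `s₀` nonzero entries. -/
def IsSparse {ι : Type*} [Fintype ι] (s₀ : ℕ) (v : ι → ℝ) : Prop :=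
  ∃ S : Finset ι, S.card ≤ s₀ ∧ ∀ i ∉ S, v i = 0

/-- `ρ_max(s₀, (|b_ij|))`: maximum of `∑ |b_ij||q_i||q_j|` over `s₀`-sparse unit vectors. -/
noncomputable def rhoMax {n : ℕ} (s₀ : ℕ) (B : Matrix (Fin n) (Fin n) ℝ) : ℝ :=
  sSup {r | ∃ q : Fin n → ℝ, e2 q = 1 ∧ IsSparse s₀ q ∧
    r = ∑ i, ∑ j, |B i j| * |q i| * |q j|}

/-- `ρ_min(s₀, |B₀|)`: minimum of `|q|ᵀ|B₀||q|` over `s₀`-sparse unit vectors. -/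
noncomputable def rhoMin {n : ℕ} (s₀ : ℕ) (B : Matrix (Fin n) (Fin n) ℝ) : ℝ :=
  sInf {r | ∃ q : Fin n → ℝ, e2 q = 1 ∧ IsSparse s₀ q ∧
    r = ∑ i, ∑ j, |B i j| * |q i| * |q j|}

/-- `ρ̃(s₀, |B₀|)`: supremum of `∑ |b_ij||q_i||h_j|` over pairs of `s₀`-sparse unit vectors. -/
noncomputable def rhoTilde {n : ℕ} (s₀ : ℕ) (B : Matrix (Fin n) (Fin n) ℝ) : ℝ :=
  sSup {r | ∃ q h : Fin n → ℝ, e2 q = 1 ∧ IsSparse s₀ q ∧ e2 h = 1 ∧ IsSparse s₀ h ∧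
    r = ∑ i, ∑ j, |B i j| * |q i| * |h j|}

-- helper lemmas
lemma e2_nonneg {ι : Type*} [Fintype ι] (v : ι → ℝ) : 0 ≤ e2 v := Real.sqrt_nonneg _

lemma e2_sq_eq {ι : Type*} [Fintype ι] (v : ι → ℝ) : e2 v ^ 2 = ∑ i, v i ^ 2 :=
  Real.sq_sqrt (Finset.sum_nonneg fun _ _ => sq_nonneg _)

lemma sum_sq_le_one {ι : Type*} [Fintype ι] {v : ι → ℝ} (h : e2 v ≤ 1) :
    ∑ i, v i ^ 2 ≤ 1 := by
  have h2 : e2 v ^ 2 ≤ 1 := by nlinarith [e2_nonneg v]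
  rwa [e2_sq_eq] at h2

lemma sum_sq_eq_one {ι : Type*} [Fintype ι] {v : ι → ℝ} (h : e2 v = 1) :
    ∑ i, v i ^ 2 = 1 := by
  have h2 := e2_sq_eq v; rw [h] at h2; simpa using h2.symm

lemma abs_le_one_of_e2 {ι : Type*} [Fintype ι] {v : ι → ℝ} (h : e2 v ≤ 1) (i : ι) :
    |v i| ≤ 1 := by
  have h1 : v i ^ 2 ≤ ∑ j, v j ^ 2 :=
    Finset.single_le_sum (f := fun j => v j ^ 2) (fun j _ => sq_nonneg _) (Finset.mem_univ i)
  have h2 := sum_sq_le_one h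
  nlinarith [abs_nonneg (v i), sq_abs (v i)]

lemma e2_eq_one_of_sum {ι : Type*} [Fintype ι] {v : ι → ℝ} (h : ∑ i, v i ^ 2 = 1) :
    e2 v = 1 := by rw [e2, h, Real.sqrt_one]

-- basis vector
lemma basis_unit {n : ℕ} (i0 : Fin n) : e2 (fun i => if i = i0 then (1:ℝ) else 0) = 1 := by
  apply e2_eq_one_of_sum
  simp [ite_pow]

lemma basis_sparse {n : ℕ} (i0 : Fin n) (s : ℕ) (hs : 1 ≤ s) :
    IsSparse s (fun i => if i = i0 then (1:ℝ) else 0) :=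
  ⟨{i0}, by simpa using hs, fun i hi => by simp [Finset.mem_singleton] at hi; simp [hi]⟩

lemma elem_le_sumAbs {n : ℕ} (B : Matrix (Fin n) (Fin n) ℝ) {q h : Fin n → ℝ}
    (hq : e2 q ≤ 1) (hh : e2 h ≤ 1) :
    ∑ i, ∑ j, |B i j| * |q i| * |h j| ≤ ∑ i, ∑ j, |B i j| := by
  refine Finset.sum_le_sum fun i _ => Finset.sum_le_sum fun j _ => ?_
  have h1 := abs_le_one_of_e2 hq i
  have h2 := abs_le_one_of_e2 hh j
  nlinarith [abs_nonneg (B i j), abs_nonneg (q i), abs_nonneg (h j),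
    mul_le_one₀ h1 (abs_nonneg (h j)) h2]

lemma rhoMax_bddAbove {n : ℕ} (s : ℕ) (B : Matrix (Fin n) (Fin n) ℝ) :
    BddAbove {r | ∃ q : Fin n → ℝ, e2 q = 1 ∧ IsSparse s q ∧
      r = ∑ i, ∑ j, |B i j| * |q i| * |q j|} := by
  refine ⟨∑ i, ∑ j, |B i j|, ?_⟩
  rintro r ⟨q, hq, -, rfl⟩
  exact elem_le_sumAbs B hq.le hq.le

lemma rhoMin_bddBelow {n : ℕ} (s : ℕ) (B : Matrix (Fin n) (Fin n) ℝ) :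
    BddBelow {r | ∃ q : Fin n → ℝ, e2 q = 1 ∧ IsSparse s q ∧
      r = ∑ i, ∑ j, |B i j| * |q i| * |q j|} := by
  refine ⟨0, ?_⟩
  rintro r ⟨q, hq, -, rfl⟩
  exact Finset.sum_nonneg fun i _ => Finset.sum_nonneg fun j _ =>
    mul_nonneg (mul_nonneg (abs_nonneg _) (abs_nonneg _)) (abs_nonneg _)

lemma rhoMax_nonneg {n : ℕ} (hn : 0 < n) (s : ℕ) (hs : 1 ≤ s)
    (B : Matrix (Fin n) (Fin n) ℝ) : 0 ≤ rhoMax s B := by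
  set q : Fin n → ℝ := fun i => if i = ⟨0, hn⟩ then 1 else 0 with hqdef
  have hmem : (∑ i, ∑ j, |B i j| * |q i| * |q j|) ∈
      {r | ∃ q : Fin n → ℝ, e2 q = 1 ∧ IsSparse s q ∧
        r = ∑ i, ∑ j, |B i j| * |q i| * |q j|} :=
    ⟨q, basis_unit _, basis_sparse _ s hs, rfl⟩
  have hle := le_csSup (rhoMax_bddAbove s B) hmem
  refine le_trans ?_ hle
  exact Finset.sum_nonneg fun i _ => Finset.sum_nonneg fun j _ =>
    mul_nonneg (mul_nonneg (abs_nonneg _) (abs_nonneg _)) (abs_nonneg _)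

lemma opNorm_bddAbove {n : ℕ} (B : Matrix (Fin n) (Fin n) ℝ) :
    BddAbove {r | ∃ q : Fin n → ℝ, e2 q ≤ 1 ∧ r = e2 (B.mulVec q)} := by
  refine ⟨Real.sqrt (∑ i, (∑ j, |B i j|) ^ 2), ?_⟩
  rintro r ⟨q, hq, rfl⟩
  rw [e2]
  apply Real.sqrt_le_sqrt
  refine Finset.sum_le_sum fun i _ => ?_
  have h1 : |B.mulVec q i| ≤ ∑ j, |B i j| := by
    calc |B.mulVec q i| ≤ ∑ j, |B i j * q j| := by
          rw [Matrix.mulVec, dotProduct]; exact Finset.abs_sum_le_sum_abs _ _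
      _ ≤ ∑ j, |B i j| := by
          refine Finset.sum_le_sum fun j _ => ?_
          rw [abs_mul]
          have := abs_le_one_of_e2 hq j
          nlinarith [abs_nonneg (B i j)]
  calc B.mulVec q i ^ 2 = |B.mulVec q i| ^ 2 := (sq_abs _).symm
    _ ≤ (∑ j, |B i j|) ^ 2 := by
        apply sq_le_sq' <;> nlinarith [abs_nonneg (B.mulVec q i)]

lemma le_rhoMax {n : ℕ} {s : ℕ} (B : Matrix (Fin n) (Fin n) ℝ) {q : Fin n → ℝ}
    (h1 : e2 q = 1) (h2 : IsSparse s q) :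
    ∑ i, ∑ j, |B i j| * |q i| * |q j| ≤ rhoMax s B :=
  le_csSup (rhoMax_bddAbove s B) ⟨q, h1, h2, rfl⟩

lemma rhoMin_le {n : ℕ} {s : ℕ} (B : Matrix (Fin n) (Fin n) ℝ) {q : Fin n → ℝ}
    (h1 : e2 q = 1) (h2 : IsSparse s q) :
    rhoMin s B ≤ ∑ i, ∑ j, |B i j| * |q i| * |q j| :=
  csInf_le (rhoMin_bddBelow s B) ⟨q, h1, h2, rfl⟩

lemma le_opNorm {n : ℕ} (B : Matrix (Fin n) (Fin n) ℝ) {q : Fin n → ℝ}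
    (h : e2 q ≤ 1) : e2 (B.mulVec q) ≤ opNorm B :=
  le_csSup (opNorm_bddAbove B) ⟨q, h, rfl⟩


/-- Lemma: bound on the two-vector sparse quantity `ρ̃(s₀, |B₀|)`. -/
theorem rhoTilde_le
    (n : ℕ) (hn : 0 < n)
    (B : Matrix (Fin n) (Fin n) ℝ) (hB : B.PosDef)
    (s₀ : ℕ) (hs₀ : 1 ≤ s₀) (hs₀n : s₀ ≤ n) :
    rhoTilde s₀ B ≤
      min (2 * rhoMax (min (2 * s₀) n) B - rhoMin s₀ B)
        (Real.sqrt s₀ * opNorm B) := by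
  have i0 : Fin n := ⟨0, hn⟩
  rw [rhoTilde]
  apply csSup_le
  · exact ⟨_, (fun i => if i = (⟨0, hn⟩ : Fin n) then (1:ℝ) else 0),
      (fun i => if i = (⟨0, hn⟩ : Fin n) then (1:ℝ) else 0),
      basis_unit _, basis_sparse _ _ hs₀, basis_unit _, basis_sparse _ _ hs₀, rfl⟩
  rintro r ⟨q, h, hq1, hqs, hh1, hhs, rfl⟩
  refine le_min ?_ ?_
  · -- first bound
    obtain ⟨Sq, hSqc, hq0⟩ := hqs
    obtain ⟨Sh, hShc, hh0⟩ := hhs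
    have hsym : ∀ i j, B j i = B i j := fun i j => by
      simpa using hB.isHermitian.apply i j
    set u : Fin n → ℝ := fun i => |q i| + |h i| with hu
    have hun : ∀ i, 0 ≤ u i := fun i => add_nonneg (abs_nonneg _) (abs_nonneg _)
    have hsq : ∑ i, q i ^ 2 = 1 := sum_sq_eq_one hq1
    have hsh : ∑ i, h i ^ 2 = 1 := sum_sq_eq_one hh1
    have hcsnn : (0:ℝ) ≤ ∑ i, |q i| * |h i| :=
      Finset.sum_nonneg fun i _ => mul_nonneg (abs_nonneg _) (abs_nonneg _)
    have hcs : ∑ i, |q i| * |h i| ≤ 1 := by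
      have h2 := Finset.sum_mul_sq_le_sq_mul_sq Finset.univ (fun i => |q i|) (fun i => |h i|)
      simp only [sq_abs] at h2
      rw [hsq, hsh] at h2
      nlinarith
    have hc2 : ∑ i, u i ^ 2 = 2 + 2 * ∑ i, |q i| * |h i| := by
      have hterm : ∀ i ∈ Finset.univ, u i ^ 2 = q i ^ 2 + h i ^ 2 + 2 * (|q i| * |h i|) := by
        intro i _
        simp only [hu]
        rw [add_sq, sq_abs, sq_abs]; ring
      rw [Finset.sum_congr rfl hterm, Finset.sum_add_distrib, Finset.sum_add_distrib,
        hsq, hsh, ← Finset.mul_sum]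
      ring
    set c := e2 u with hcdef
    have hcnn : 0 ≤ c := e2_nonneg u
    have hcsq : c ^ 2 = 2 + 2 * ∑ i, |q i| * |h i| := by rw [hcdef, e2_sq_eq, hc2]
    have hcpos : 0 < c := by nlinarith
    have hcle2 : c ≤ 2 := by nlinarith
    set v : Fin n → ℝ := fun i => u i / c with hv
    have hvn : ∀ i, 0 ≤ v i := fun i => div_nonneg (hun i) hcnn
    have hv1 : e2 v = 1 := by
      apply e2_eq_one_of_sum
      simp only [hv, div_pow]
      rw [← Finset.sum_div, hc2, ← hcsq]
      field_simp
    have hvs : IsSparse (min (2 * s₀) n) v := by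
      refine ⟨Sq ∪ Sh, ?_, ?_⟩
      · refine le_min (le_trans (Finset.card_union_le _ _) (by omega)) ?_
        exact le_trans (Finset.card_le_univ _) (by simp)
      · intro i hi
        rw [Finset.mem_union] at hi; push_neg at hi
        simp [hv, hu, hq0 i hi.1, hh0 i hi.2]
    have hvle : ∑ i, ∑ j, |B i j| * |v i| * |v j| ≤ rhoMax (min (2 * s₀) n) B :=
      le_rhoMax B hv1 hvs
    have hfvnn : (0:ℝ) ≤ ∑ i, ∑ j, |B i j| * |v i| * |v j| :=
      Finset.sum_nonneg fun i _ => Finset.sum_nonneg fun j _ =>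
        mul_nonneg (mul_nonneg (abs_nonneg _) (abs_nonneg _)) (abs_nonneg _)
    have hfu : ∑ i, ∑ j, |B i j| * u i * u j
        = c ^ 2 * ∑ i, ∑ j, |B i j| * |v i| * |v j| := by
      rw [Finset.mul_sum]
      refine Finset.sum_congr rfl fun i _ => ?_
      rw [Finset.mul_sum]
      refine Finset.sum_congr rfl fun j _ => ?_
      rw [abs_of_nonneg (hvn i), abs_of_nonneg (hvn j)]
      simp only [hv]
      field_simp
    have hswap : (∑ i, ∑ j, |B i j| * |h i| * |q j|)
        = ∑ i, ∑ j, |B i j| * |q i| * |h j| := by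
      rw [Finset.sum_comm]
      refine Finset.sum_congr rfl fun x _ => Finset.sum_congr rfl fun y _ => ?_
      rw [hsym x y]; ring
    have hexp : ∑ i, ∑ j, |B i j| * u i * u j
        = (∑ i, ∑ j, |B i j| * |q i| * |q j|) + (∑ i, ∑ j, |B i j| * |h i| * |h j|)
          + 2 * ∑ i, ∑ j, |B i j| * |q i| * |h j| := by
      have hterm : ∀ i ∈ Finset.univ, ∀ j ∈ Finset.univ,
          |B i j| * u i * u j = |B i j| * |q i| * |q j| + |B i j| * |q i| * |h j|
            + |B i j| * |h i| * |q j| + |B i j| * |h i| * |h j| := by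
        intro i _ j _
        simp only [hu]
        ring
      calc ∑ i, ∑ j, |B i j| * u i * u j
          = ∑ i, ∑ j, (|B i j| * |q i| * |q j| + |B i j| * |q i| * |h j|
              + |B i j| * |h i| * |q j| + |B i j| * |h i| * |h j|) := by
            refine Finset.sum_congr rfl fun i hi => Finset.sum_congr rfl fun j hj => ?_
            exact hterm i hi j hj
        _ = _ := by
            simp only [Finset.sum_add_distrib]
            rw [hswap]; ring
    have hfq : rhoMin s₀ B ≤ ∑ i, ∑ j, |B i j| * |q i| * |q j| :=
      rhoMin_le B hq1 ⟨Sq, hSqc, hq0⟩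
    have hfh : rhoMin s₀ B ≤ ∑ i, ∑ j, |B i j| * |h i| * |h j| :=
      rhoMin_le B hh1 ⟨Sh, hShc, hh0⟩
    have hrmax : 0 ≤ rhoMax (min (2 * s₀) n) B :=
      rhoMax_nonneg hn _ (le_min (by omega) hn) B
    have hkey : c ^ 2 * (∑ i, ∑ j, |B i j| * |v i| * |v j|)
        ≤ 4 * rhoMax (min (2 * s₀) n) B := by nlinarith
    linarith [hexp, hfu, hfq, hfh, hkey]
  · -- spectral bound
    obtain ⟨Sq, hSqc, hq0⟩ := hqs
    set w : Fin n → ℝ := fun i => ∑ j, |B i j| * |h j| with hwdef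
    have hwnn : ∀ i, 0 ≤ w i := fun i =>
      Finset.sum_nonneg fun j _ => mul_nonneg (abs_nonneg _) (abs_nonneg _)
    have hwle : ∀ i, w i ≤ opNorm B := by
      intro i
      set h' : Fin n → ℝ := fun j => if B i j < 0 then -|h j| else |h j| with hh'
      have hmv : B.mulVec h' i = w i := by
        rw [Matrix.mulVec, dotProduct]
        simp only [hwdef, hh']
        refine Finset.sum_congr rfl fun j _ => ?_
        by_cases hb : B i j < 0
        · rw [if_pos hb, abs_of_neg hb]; ring
        · rw [if_neg hb, abs_of_nonneg (not_lt.1 hb)]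
      have he2h' : e2 h' ≤ 1 := by
        have hsqeq : ∑ j, h' j ^ 2 = ∑ j, h j ^ 2 := by
          refine Finset.sum_congr rfl fun j _ => ?_
          simp only [hh']
          by_cases hb : B i j < 0
          · rw [if_pos hb, neg_sq, sq_abs]
          · rw [if_neg hb, sq_abs]
        rw [e2, hsqeq, ← e2, hh1]
      have h1 : e2 (B.mulVec h') ≤ opNorm B := le_opNorm B he2h'
      have h2 : w i ≤ e2 (B.mulVec h') := by
        rw [← hmv, e2]
        calc B.mulVec h' i ≤ |B.mulVec h' i| := le_abs_self _
          _ = Real.sqrt (B.mulVec h' i ^ 2) := by rw [Real.sqrt_sq_eq_abs]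
          _ ≤ Real.sqrt (∑ k, B.mulVec h' k ^ 2) := Real.sqrt_le_sqrt
              (Finset.single_le_sum (f := fun k => B.mulVec h' k ^ 2) (fun k _ => sq_nonneg _) (Finset.mem_univ i))
      linarith
    have hopnn : 0 ≤ opNorm B := le_trans (hwnn ⟨0, hn⟩) (hwle ⟨0, hn⟩)
    have hQ : ∑ i, ∑ j, |B i j| * |q i| * |h j| = ∑ i, |q i| * w i := by
      refine Finset.sum_congr rfl fun i _ => ?_
      simp only [hwdef]
      rw [Finset.mul_sum]
      exact Finset.sum_congr rfl fun j _ => by ring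
    have hsupp : ∑ i, |q i| * w i = ∑ i ∈ Sq, |q i| * w i :=
      (Finset.sum_subset (Finset.subset_univ Sq)
        (fun i _ hi => by rw [hq0 i hi]; simp)).symm
    have hsum1 : ∑ i ∈ Sq, |q i| * w i ≤ (∑ i ∈ Sq, |q i|) * opNorm B := by
      rw [Finset.sum_mul]
      exact Finset.sum_le_sum fun i _ => mul_le_mul_of_nonneg_left (hwle i) (abs_nonneg _)
    have hl1 : ∑ i ∈ Sq, |q i| ≤ Real.sqrt s₀ := by
      have hcs := Finset.sum_mul_sq_le_sq_mul_sq Sq (fun _ => (1:ℝ)) (fun i => |q i|)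
      simp only [one_pow, one_mul, sq_abs, Finset.sum_const, nsmul_eq_mul] at hcs
      have h2 : ∑ i ∈ Sq, q i ^ 2 ≤ 1 := by
        refine le_trans ?_ (le_of_eq (sum_sq_eq_one hq1))
        exact Finset.sum_le_sum_of_subset_of_nonneg (Finset.subset_univ _)
          (fun i _ _ => sq_nonneg _)
      have h3 : (Sq.card : ℝ) ≤ (s₀ : ℝ) := by exact_mod_cast hSqc
      have h4 : (0:ℝ) ≤ ∑ i ∈ Sq, |q i| := Finset.sum_nonneg fun i _ => abs_nonneg _
      have h5 : (0:ℝ) ≤ ∑ i ∈ Sq, q i ^ 2 := Finset.sum_nonneg fun i _ => sq_nonneg _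
      have h6 : (0:ℝ) ≤ (Sq.card : ℝ) := Nat.cast_nonneg _
      nlinarith [Real.sq_sqrt (by positivity : (0:ℝ) ≤ (s₀:ℝ)), Real.sqrt_nonneg (s₀:ℝ)]
    calc ∑ i, ∑ j, |B i j| * |q i| * |h j| = ∑ i ∈ Sq, |q i| * w i := by rw [hQ, hsupp]
      _ ≤ (∑ i ∈ Sq, |q i|) * opNorm B := hsum1
      _ ≤ Real.sqrt s₀ * opNorm B := mul_le_mul_of_nonneg_right hl1 hopnn
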